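/- Let (C•, d) be a bounded acyclic complex of Hilbert spaces with closed densely defined differentials (exact at every degree, with Im(d) closed equal to Ker(d)). Then the complex is contractible: there exist bounded operators H : Cⁿ → Cⁿ⁻¹ such that Hd + dH = id on Dom(d). -/

import Mathlib

/-- **An acyclic Hilbert complex is contractible.**
Let `(C•, d)` be a bounded complex of Hilbert spaces with closed densely
defined differentials `dₙ : Cⁿ → Cⁿ⁺¹` which is exact at every degree with
`Im(dₙ)` closed and equal to `Ker(dₙ₊₁)`.  Then there exist bounded operators
`Hₙ : Cⁿ⁺¹ → Cⁿ` with `H d + d H = id` on `Dom(d)` at every degree. -/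
theorem acyclic_hilbert_complex_contractible
    (C : ℤ → Type*)
    [∀ n, NormedAddCommGroup (C n)] [∀ n, InnerProductSpace ℝ (C n)]
    [∀ n, CompleteSpace (C n)]
    (d : ∀ n : ℤ, C n →ₗ.[ℝ] C (n + 1))
    (hbounded : ∃ N : ℕ, ∀ n : ℤ, (N : ℤ) < |n| → Subsingleton (C n))
    (hclosed : ∀ n, (d n).IsClosed)
    (hdense : ∀ n, Dense ((d n).domain : Set (C n)))
    -- exactness with closed ranges: `Im(dₙ) = Ker(dₙ₊₁)` (this includes `d² = 0`)
    (hexact : ∀ n, LinearMap.range (d n).toFun =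
      (LinearMap.ker (d (n + 1)).toFun).map (d (n + 1)).domain.subtype) :
    ∃ H : ∀ n : ℤ, C (n + 1) →L[ℝ] C n,
      ∀ (n : ℤ) (x : C (n + 1)) (hx : x ∈ (d (n + 1)).domain),
        ∃ hHx : H n x ∈ (d n).domain,
          (d n) ⟨H n x, hHx⟩ + H (n + 1) ((d (n + 1)) ⟨x, hx⟩) = x := by
  classical
  clear hbounded hdense
  -- the kernel submodules
  set κ : ∀ n : ℤ, Submodule ℝ (C n) :=
    fun n => (LinearMap.ker (d n).toFun).map (d n).domain.subtype with hκdef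
  have hκ_mem : ∀ (n : ℤ) (x : C n),
      x ∈ κ n ↔ ∃ h : x ∈ (d n).domain, d n ⟨x, h⟩ = 0 := by
    intro n x
    constructor
    · rintro ⟨y, hy, rfl⟩
      exact ⟨y.2, hy⟩
    · rintro ⟨h, hd⟩
      exact ⟨⟨x, h⟩, hd, rfl⟩
  have hκ_dom : ∀ (n : ℤ) (x : C n), x ∈ κ n → x ∈ (d n).domain := by
    intro n x hx
    exact ((hκ_mem n x).1 hx).choose
  have hκ_zero : ∀ (n : ℤ) (x : C n) (hx : x ∈ κ n) (h : x ∈ (d n).domain),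
      d n ⟨x, h⟩ = 0 := by
    intro n x hx h
    obtain ⟨h', hd⟩ := (hκ_mem n x).1 hx
    convert hd using 2
  -- the kernels are closed
  have hκ_closed : ∀ n, IsClosed ((κ n : Set (C n))) := by
    intro n
    have heq : (κ n : Set (C n)) =
        (fun x : C n => ((x, (0 : C (n + 1))) : C n × C (n + 1))) ⁻¹'
          ((d n).graph : Set (C n × C (n + 1))) := by
      ext x
      simp only [Set.mem_preimage, SetLike.mem_coe, LinearPMap.mem_graph_iff]
      constructor
      · intro hx
        obtain ⟨h, hd⟩ := (hκ_mem n x).1 hx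
        exact ⟨⟨x, h⟩, rfl, hd⟩
      · rintro ⟨y, h1, h2⟩
        exact (hκ_mem n x).2 ⟨h1 ▸ y.2, by
          convert h2 using 2
          exact Subtype.ext h1.symm⟩
    rw [heq]
    exact (hclosed n).preimage (continuous_id.prodMk continuous_const)
  -- uniqueness of preimages orthogonal to the kernel
  have huniq : ∀ (n : ℤ) (u v : C n) (hu : u ∈ (d n).domain) (hv : v ∈ (d n).domain),
      u ∈ (κ n)ᗮ → v ∈ (κ n)ᗮ → d n ⟨u, hu⟩ = d n ⟨v, hv⟩ → u = v := by
    intro n u v hu hv hu' hv' hd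
    have hsub : (⟨u - v, sub_mem hu hv⟩ : (d n).domain) = ⟨u, hu⟩ - ⟨v, hv⟩ :=
      Subtype.ext rfl
    have hmem : u - v ∈ κ n := (hκ_mem n _).2 ⟨sub_mem hu hv, by
      rw [hsub, (d n).map_sub, hd, sub_self]⟩
    have hperp : u - v ∈ (κ n)ᗮ := sub_mem hu' hv'
    have hbot : u - v ∈ (⊥ : Submodule ℝ (C n)) :=
      (Submodule.orthogonal_disjoint (κ n)).le_bot (Submodule.mem_inf.2 ⟨hmem, hperp⟩)
    exact sub_eq_zero.1 (Submodule.mem_bot ℝ |>.1 hbot)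
  -- existence of preimages orthogonal to the kernel
  have hexist : ∀ (n : ℤ) (y : C (n + 1)), y ∈ κ (n + 1) →
      ∃ u : C n, ∃ hu : u ∈ (d n).domain, u ∈ (κ n)ᗮ ∧ d n ⟨u, hu⟩ = y := by
    intro n y hy
    have hy' : y ∈ LinearMap.range (d n).toFun := by rw [hexact n]; exact hy
    obtain ⟨w, hw⟩ := hy'
    haveI : CompleteSpace (κ n) := (hκ_closed n).completeSpace_coe
    set pw : C n := (Submodule.orthogonalProjection (κ n) (w : C n) : C n) with hpw
    have hpw_mem : pw ∈ κ n := (Submodule.orthogonalProjection (κ n) (w : C n)).2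
    have hpw_dom : pw ∈ (d n).domain := hκ_dom n pw hpw_mem
    refine ⟨(w : C n) - pw, sub_mem w.2 hpw_dom, ?_, ?_⟩
    · exact Submodule.sub_starProjection_mem_orthogonal (K := κ n) (w : C n)
    · have hsub : (⟨(w : C n) - pw, sub_mem w.2 hpw_dom⟩ : (d n).domain)
          = ⟨(w : C n), w.2⟩ - ⟨pw, hpw_dom⟩ := Subtype.ext rfl
      rw [hsub, (d n).map_sub, hκ_zero n pw hpw_mem hpw_dom, sub_zero]
      have : (⟨(w : C n), w.2⟩ : (d n).domain) = w := Subtype.ext rfl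
      rw [this]
      exact hw
  -- construction of the contraction at each degree
  have key : ∀ n : ℤ, ∃ Hn : C (n + 1) →L[ℝ] C n, ∀ x : C (n + 1),
      ∃ h : Hn x ∈ (d n).domain, Hn x ∈ (κ n)ᗮ ∧
        d n ⟨Hn x, h⟩ ∈ κ (n + 1) ∧ x - d n ⟨Hn x, h⟩ ∈ (κ (n + 1))ᗮ := by
    intro n
    haveI : CompleteSpace (κ (n + 1)) := (hκ_closed (n + 1)).completeSpace_coe
    choose g hg₁ hg₂ hg₃ using fun y : κ (n + 1) => hexist n (y : C (n + 1)) y.2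
    have gadd : ∀ y z : κ (n + 1), g (y + z) = g y + g z := by
      intro y z
      refine huniq n _ _ (hg₁ (y + z)) (add_mem (hg₁ y) (hg₁ z)) (hg₂ _)
        (add_mem (hg₂ y) (hg₂ z)) ?_
      have hsub : (⟨g y + g z, add_mem (hg₁ y) (hg₁ z)⟩ : (d n).domain)
          = ⟨g y, hg₁ y⟩ + ⟨g z, hg₁ z⟩ := Subtype.ext rfl
      rw [hg₃, hsub, (d n).map_add, hg₃, hg₃, Submodule.coe_add]
    have gsmul : ∀ (c : ℝ) (y : κ (n + 1)), g (c • y) = c • g y := by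
      intro c y
      refine huniq n _ _ (hg₁ (c • y)) (Submodule.smul_mem _ c (hg₁ y)) (hg₂ _)
        (Submodule.smul_mem _ c (hg₂ y)) ?_
      have hsub : (⟨c • g y, Submodule.smul_mem _ c (hg₁ y)⟩ : (d n).domain)
          = c • ⟨g y, hg₁ y⟩ := Subtype.ext rfl
      rw [hg₃, hsub, (d n).map_smul, hg₃, Submodule.coe_smul]
    set glin : κ (n + 1) →ₗ[ℝ] C n :=
      { toFun := g, map_add' := gadd, map_smul' := gsmul } with hglin
    have hgraph : IsClosed (glin.graph : Set (κ (n + 1) × C n)) := by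
      have heq : (glin.graph : Set (κ (n + 1) × C n)) =
          {p : κ (n + 1) × C n | p.2 ∈ (κ n)ᗮ} ∩
          {p : κ (n + 1) × C n | ((p.2, (p.1 : C (n + 1))) : C n × C (n + 1)) ∈
            ((d n).graph : Set (C n × C (n + 1)))} := by
        ext p
        simp only [Set.mem_inter_iff, Set.mem_setOf_eq, SetLike.mem_coe,
          LinearMap.mem_graph_iff, LinearPMap.mem_graph_iff]
        constructor
        · intro hpg
          rw [hpg]
          exact ⟨hg₂ p.1, ⟨⟨g p.1, hg₁ p.1⟩, rfl, hg₃ p.1⟩⟩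
        · rintro ⟨hperp, z, hz1, hz2⟩
          refine huniq n _ _ (hz1 ▸ z.2) (hg₁ p.1) hperp (hg₂ p.1) ?_
          have h1 : (⟨p.2, hz1 ▸ z.2⟩ : (d n).domain) = z := Subtype.ext hz1.symm
          rw [h1, hz2]
          exact (hg₃ p.1).symm
      rw [heq]
      refine IsClosed.inter ?_ ?_
      · exact (Submodule.isClosed_orthogonal (κ n)).preimage continuous_snd
      · exact (hclosed n).preimage
          (continuous_snd.prodMk (continuous_subtype_val.comp continuous_fst))
    set G : κ (n + 1) →L[ℝ] C n := ContinuousLinearMap.ofIsClosedGraph hgraph with hG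
    refine ⟨G.comp (Submodule.orthogonalProjection (κ (n + 1))), fun x => ?_⟩
    have happ : (G.comp (Submodule.orthogonalProjection (κ (n + 1)))) x
        = g (Submodule.orthogonalProjection (κ (n + 1)) x) := rfl
    set y : κ (n + 1) := Submodule.orthogonalProjection (κ (n + 1)) x with hy
    rw [happ]
    refine ⟨hg₁ y, hg₂ y, ?_, ?_⟩
    · rw [hg₃ y]; exact y.2
    · rw [hg₃ y]
      exact Submodule.sub_starProjection_mem_orthogonal (K := κ (n + 1)) x
  choose H hH using key
  refine ⟨H, fun n x hx => ?_⟩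
  obtain ⟨h₁, hperp₁, hmem₁, horth₁⟩ := hH n x
  obtain ⟨h₂, hperp₂, hmem₂, horth₂⟩ := hH (n + 1) (d (n + 1) ⟨x, hx⟩)
  set p : C (n + 1) := d n ⟨H n x, h₁⟩ with hp
  set b : C (n + 1) := H (n + 1) (d (n + 1) ⟨x, hx⟩) with hb
  -- `d x` lies in the kernel at degree `n+2`
  have hdx : d (n + 1) ⟨x, hx⟩ ∈ κ (n + 1 + 1) := by
    have h := LinearMap.mem_range_self (d (n + 1)).toFun ⟨x, hx⟩
    rw [hexact (n + 1)] at h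
    exact h
  -- hence `d b = d x`
  have hq : d (n + 1) ⟨b, h₂⟩ = d (n + 1) ⟨x, hx⟩ := by
    have hsub : d (n + 1) ⟨x, hx⟩ - d (n + 1) ⟨b, h₂⟩ ∈ κ (n + 1 + 1) :=
      sub_mem hdx hmem₂
    have hbot : d (n + 1) ⟨x, hx⟩ - d (n + 1) ⟨b, h₂⟩ ∈ (⊥ : Submodule ℝ (C (n + 1 + 1))) :=
      (Submodule.orthogonal_disjoint (κ (n + 1 + 1))).le_bot
        (Submodule.mem_inf.2 ⟨hsub, horth₂⟩)
    exact (sub_eq_zero.1 (Submodule.mem_bot ℝ |>.1 hbot)).symm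
  -- `b = x - p` by uniqueness
  have hpdom : p ∈ (d (n + 1)).domain := hκ_dom (n + 1) p hmem₁
  have hxp_dom : x - p ∈ (d (n + 1)).domain := sub_mem hx hpdom
  have hbeq : b = x - p := by
    refine huniq (n + 1) b (x - p) h₂ hxp_dom hperp₂ horth₁ ?_
    rw [hq]
    have hsub : (⟨x - p, hxp_dom⟩ : (d (n + 1)).domain)
        = ⟨x, hx⟩ - ⟨p, hpdom⟩ := Subtype.ext rfl
    rw [hsub, (d (n + 1)).map_sub, hκ_zero (n + 1) p hmem₁ hpdom, sub_zero]
  exact ⟨h₁, by rw [hbeq]; abel⟩
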